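/- Let z ∈ ℝ³ \ {0} be identified with a quaternion with vanishing k-component, and suppose z⁰ + |z| > 0. Set x₀ = (z + |z|)/√(2(z⁰ + |z|)), a quaternion with vanishing k-component. Then for every φ ∈ ℝ, the quaternion x = x₀(cos φ + k sin φ) satisfies KS(x) = x·x* = z, where x* flips the sign of the k-component. -/

import Mathlib

/-- The conjugation flipping only the sign of the `k`-component. -/
def qstar (x : Quaternion ℝ) : Quaternion ℝ := ⟨x.re, x.imI, x.imJ, -x.imK⟩

/-- The Kustaanheimo–Stiefel map. -/
noncomputable def KS (x : Quaternion ℝ) : Quaternion ℝ := x * qstar x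

/-- The quaternion unit `k`. -/
def qk : Quaternion ℝ := ⟨0, 0, 0, 1⟩

/-- Every quaternion of the form `x₀(cos φ + k sin φ)`, with
`x₀ = (z + |z|)/√(2(z⁰ + |z|))`, is a preimage of `z ∈ ℝ³ \ {0}` under the
Kustaanheimo–Stiefel map. -/
theorem KS_preimage (z : Quaternion ℝ) (hz3 : z.imK = 0) (hz0 : z ≠ 0)
    (hzpos : 0 < z.re + ‖z‖) (φ : ℝ) :
    KS ((Real.sqrt (2 * (z.re + ‖z‖)))⁻¹ •
        ((z + ((‖z‖ : ℝ) : Quaternion ℝ)) *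
          (((Real.cos φ : ℝ) : Quaternion ℝ) + Real.sin φ • qk))) = z := by
  have hn : ‖z‖ * ‖z‖ = z.re^2 + z.imI^2 + z.imJ^2 := by
    have h := Quaternion.normSq_def' z
    rw [hz3, ← Quaternion.normSq_eq_norm_mul_self] at *
    rw [h]; ring
  set s := Real.sqrt (2*(z.re+‖z‖)) with hsdef
  have hs : s * s = 2*(z.re+‖z‖) := Real.mul_self_sqrt (by positivity)
  have hs0 : s ≠ 0 := by rw [hsdef]; positivity
  have htrig := Real.sin_sq_add_cos_sq φ
  have hq : ∀ x : Quaternion ℝ, (qstar x).re = x.re ∧ (qstar x).imI = x.imI ∧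
      (qstar x).imJ = x.imJ ∧ (qstar x).imK = -x.imK := fun _ => ⟨rfl, rfl, rfl, rfl⟩
  have hk : qk.re = 0 ∧ qk.imI = 0 ∧ qk.imJ = 0 ∧ qk.imK = 1 := ⟨rfl, rfl, rfl, rfl⟩
  ext <;>
    simp [KS, hq, hk, Quaternion.re_mul, Quaternion.imI_mul, Quaternion.imJ_mul,
      Quaternion.imK_mul, hz3] <;>
    field_simp
  · linear_combination ((z.re+‖z‖)^2 - z.imI^2 - z.imJ^2) * htrig + hn - z.re * hs
  · linear_combination 2*(z.re+‖z‖)*z.imI*htrig - z.imI * hs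
  · linear_combination 2*(z.re+‖z‖)*z.imJ*htrig - z.imJ * hs
  · exact Or.inr (by ring)
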